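/- arXiv:1307.1878 — 4 statements merged into one kernel-verified Lean document; each statement's English description precedes it below -/
import Mathlib

section
/- Let G be a group and H a subgroup of finite index n, and let χ : H → ℂˣ be a group homomorphism (a one-dimensional character of H). Let ρ = Ind_H^G(χ) be the induced representation of G, realized on the n-dimensional complex vector space V_χ = { f : G → ℂ | f(hx) = χ(h)·f(x) for all h ∈ H, x ∈ G } with action (ρ(g)f)(x) = f(xg), and let r = Ind_H^G(1) be the representation induced from the trivial character of H, realized on V_1 in the same way. Then for every g ∈ G one has det(ρ(g)) · det(r(g))⁻¹ = χ(Ver(g)), where Ver : G → H^{ab} denotes the transfer (Verlagerung) homomorphism, i.e. det(ρ(g)) = (transfer of χ from H to G)(g) · det(r(g)). -/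
noncomputable section

/-- The space of the representation of `G` induced from a one-dimensional
character `χ` of a subgroup `H`: functions `f : G → ℂ` with
`f (h * x) = χ h * f x` for all `h ∈ H`, `x ∈ G`. -/
def indSpace {G : Type*} [Group G] (H : Subgroup G) (χ : H →* ℂˣ) :
    Submodule ℂ (G → ℂ) where
  carrier := {f | ∀ (h : H) (x : G), f ((h : G) * x) = (χ h : ℂ) * f x}
  add_mem' := by
    intro a b ha hb h x
    simp only [Pi.add_apply, ha h x, hb h x, mul_add]
  zero_mem' := by
    intro h x
    simp
  smul_mem' := by
    intro c a ha h x
    simp only [Pi.smul_apply, smul_eq_mul, ha h x]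
    ring

/-- The action of `g : G` on the induced representation space:
`(ρ(g) f)(x) = f (x * g)`. -/
def indAct {G : Type*} [Group G] (H : Subgroup G) (χ : H →* ℂˣ) (g : G) :
    indSpace H χ →ₗ[ℂ] indSpace H χ where
  toFun f := ⟨fun x => (f : G → ℂ) (x * g), by
    intro h x
    simpa [mul_assoc] using f.2 h (x * g)⟩
  map_add' f₁ f₂ := by ext x; rfl
  map_smul' c f := by ext x; rfl

namespace IndDetAux

variable {G : Type*} [Group G] {H : Subgroup G} (χ : H →* ℂˣ)
  (T : H.LeftTransversal)

/-- Coset representative. -/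
def trep (q : G ⧸ H) : G := T.2.leftQuotientEquiv q

lemma trep_spec (q : G ⧸ H) : ((trep T q : G) : G ⧸ H) = q :=
  T.2.quotientGroupMk_leftQuotientEquiv q

lemma mem_w (x : G) : x * trep T ((x⁻¹ : G) : G ⧸ H) ∈ H := by
  have h := QuotientGroup.eq.mp (trep_spec T ((x⁻¹ : G) : G ⧸ H))
  simpa [mul_inv_rev] using H.inv_mem h

def w (x : G) : H := ⟨x * trep T ((x⁻¹ : G) : G ⧸ H), mem_w T x⟩

lemma quot_eq_of_mul (h : H) (x : G) :
    (((h : G) * x)⁻¹ : G) = ((x⁻¹ : G) * (h : G)⁻¹) := by rw [mul_inv_rev]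

def indEquiv : indSpace H χ ≃ₗ[ℂ] ((G ⧸ H) → ℂ) where
  toFun f q := (f : G → ℂ) (trep T q)⁻¹
  map_add' f₁ f₂ := rfl
  map_smul' c f := rfl
  invFun c := ⟨fun x => (χ (w T x) : ℂ) * c ((x⁻¹ : G) : G ⧸ H), by
    intro h x
    have hq : ((((h : G) * x)⁻¹ : G) : G ⧸ H) = ((x⁻¹ : G) : G ⧸ H) := by
      rw [QuotientGroup.eq]
      simpa [mul_inv_rev, mul_assoc] using h.2
    have hw : w T ((h : G) * x) = h * w T x := by
      apply Subtype.ext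
      show ((h : G) * x) * trep T _ = (h : G) * (x * trep T _)
      rw [hq, mul_assoc]
    show (χ (w T ((h : G) * x)) : ℂ) * c _ = _
    rw [hq, hw, map_mul, Units.val_mul, mul_assoc]⟩
  left_inv f := by
    apply Subtype.ext; funext x
    show (χ (w T x) : ℂ) * (f : G → ℂ) (trep T ((x⁻¹ : G) : G ⧸ H))⁻¹ = (f : G → ℂ) x
    rw [← f.2 (w T x) (trep T ((x⁻¹ : G) : G ⧸ H))⁻¹]
    exact congrArg (f : G → ℂ) (mul_inv_cancel_right x (trep T ((x⁻¹ : G) : G ⧸ H)))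
  right_inv c := by
    funext q
    show (χ (w T ((trep T q)⁻¹)) : ℂ) * c (((((trep T q)⁻¹)⁻¹ : G)) : G ⧸ H) = c q
    have hq : (((((trep T q)⁻¹)⁻¹ : G)) : G ⧸ H) = q := by
      rw [inv_inv]; exact trep_spec T q
    have hw : w T ((trep T q)⁻¹) = 1 := by
      apply Subtype.ext
      show (trep T q)⁻¹ * trep T _ = 1
      rw [hq, inv_mul_cancel]
    rw [hq, hw, map_one, Units.val_one, one_mul]

variable (g : G)

lemma mem_d (q : G ⧸ H) : (trep T q)⁻¹ * (g * trep T (g⁻¹ • q)) ∈ H := by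
  rw [← QuotientGroup.eq, trep_spec]
  have h : ((g * trep T (g⁻¹ • q) : G) : G ⧸ H)
      = g • ((trep T (g⁻¹ • q) : G) : G ⧸ H) :=
    (MulAction.Quotient.smul_mk H g _).symm
  rw [h, trep_spec, smul_inv_smul]

def d (q : G ⧸ H) : ℂˣ := χ ⟨(trep T q)⁻¹ * (g * trep T (g⁻¹ • q)), mem_d T g q⟩

lemma conj_apply (c : (G ⧸ H) → ℂ) (q : G ⧸ H) :
    (indEquiv χ T) ((indAct H χ g) ((indEquiv χ T).symm c)) q
      = (d χ T g q : ℂ) * c (g⁻¹ • q) := by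
  have hq2 : ((((trep T q)⁻¹ * g)⁻¹ : G) : G ⧸ H) = g⁻¹ • q := by
    rw [mul_inv_rev, inv_inv,
      show ((g⁻¹ * trep T q : G) : G ⧸ H) = g⁻¹ • ((trep T q : G) : G ⧸ H) from
        (MulAction.Quotient.smul_mk H g⁻¹ (trep T q)).symm,
      trep_spec]
  have hw2 : w T ((trep T q)⁻¹ * g)
      = ⟨(trep T q)⁻¹ * (g * trep T (g⁻¹ • q)), mem_d T g q⟩ := by
    apply Subtype.ext
    show ((trep T q)⁻¹ * g) * trep T _ = (trep T q)⁻¹ * (g * trep T (g⁻¹ • q))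
    rw [hq2, mul_assoc]
  show (χ (w T ((trep T q)⁻¹ * g)) : ℂ) * c _ = _
  rw [hq2, hw2]
  rfl

lemma det_indAct [H.FiniteIndex] [Fintype (G ⧸ H)] [DecidableEq (G ⧸ H)] :
    LinearMap.det (indAct H χ g)
      = (∏ q : G ⧸ H, (d χ T g q : ℂ))
        * (((Equiv.Perm.sign (MulAction.toPerm g⁻¹ : Equiv.Perm (G ⧸ H))) : ℤ) : ℂ) := by
  set e := indEquiv χ T
  rw [← LinearMap.det_conj (indAct H χ g) e, ← LinearMap.det_toMatrix']
  have hA : LinearMap.toMatrix'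
        ((e : indSpace H χ →ₗ[ℂ] ((G ⧸ H) → ℂ)) ∘ₗ indAct H χ g
          ∘ₗ (e.symm : ((G ⧸ H) → ℂ) →ₗ[ℂ] indSpace H χ))
      = Matrix.diagonal (fun q => (d χ T g q : ℂ))
        * ((MulAction.toPerm g⁻¹ : Equiv.Perm (G ⧸ H)).permMatrix ℂ) := by
    ext i j
    rw [LinearMap.toMatrix'_apply]
    simp only [LinearMap.coe_comp, Function.comp_apply, LinearEquiv.coe_coe]
    rw [conj_apply]
    by_cases h : g⁻¹ • i = j <;>
      simp [Matrix.diagonal_mul, Equiv.Perm.permMatrix, PEquiv.toMatrix_apply,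
        Equiv.toPEquiv_apply, Option.mem_some_iff, h, MulAction.toPerm_apply]
  rw [hA, Matrix.det_mul, Matrix.det_diagonal, Matrix.det_permutation]

end IndDetAux

open IndDetAux in
/-- For `ρ = Ind_H^G χ` and `r = Ind_H^G 1`, we have
`det ρ(g) * det r(g)⁻¹ = χ(Ver g)`, where `Ver` is the transfer. -/
theorem det_ind_mul_det_ind_one_inv_eq_transfer
    {G : Type*} [Group G] (H : Subgroup G) [H.FiniteIndex]
    (χ : H →* ℂˣ) (g : G) :
    LinearMap.det (indAct H χ g) * (LinearMap.det (indAct H (1 : H →* ℂˣ) g))⁻¹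
      = ((MonoidHom.transfer χ g : ℂˣ) : ℂ) := by
  letI := H.fintypeQuotientOfFiniteIndex
  letI : DecidableEq (G ⧸ H) := Classical.decEq _
  set T : H.LeftTransversal := Inhabited.default with hT
  rw [det_indAct χ T g, det_indAct (1 : H →* ℂˣ) T g]
  have hd1 : ∀ q : G ⧸ H, d (1 : H →* ℂˣ) T g q = 1 := fun q => rfl
  simp only [hd1, Units.val_one, Finset.prod_const_one, one_mul]
  set s := (((Equiv.Perm.sign (MulAction.toPerm g⁻¹ : Equiv.Perm (G ⧸ H))) : ℤ) : ℂ) with hs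
  have hs0 : s ≠ 0 := by
    rcases Int.units_eq_one_or (Equiv.Perm.sign (MulAction.toPerm g⁻¹ : Equiv.Perm (G ⧸ H)))
      with h | h <;> rw [hs, h] <;> norm_num
  rw [mul_assoc, mul_inv_cancel₀ hs0, mul_one]
  rw [MonoidHom.transfer_def χ T g]
  have hdiff : Subgroup.leftTransversals.diff χ T (g • T) = ∏ q : G ⧸ H, d χ T g q := by
    unfold Subgroup.leftTransversals.diff
    refine Finset.prod_congr rfl fun q _ => congrArg χ (Subtype.ext ?_)
    have hβ := Subgroup.smul_apply_eq_smul_apply_inv_smul g T q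
    rw [smul_eq_mul] at hβ
    show (trep T q)⁻¹ * (((g • T).2.leftQuotientEquiv q : G)) = _
    rw [hβ]
    rfl
  rw [hdiff]
  exact (map_prod (Units.coeHom ℂ) _ _).symm

end
end

section
/- Every continuous group homomorphism χ : ℂˣ → ℂˣ has the form χ(z) = [z]^l · |z|_ℂ^t, i.e. there exist a unique integer l ∈ ℤ and a unique complex number t ∈ ℂ such that χ(z) = (z/|z|)^l · exp(t · log(|z|²)) for all z ∈ ℂˣ. -/
open Complex intervalIntegral MeasureTheory

lemma aux_hom_exp (φ : ℝ → ℂ) (hc : Continuous φ) (h0 : φ 0 = 1)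
    (hmul : ∀ s t, φ (s + t) = φ s * φ t) : ∃ c : ℂ, ∀ t, φ t = Complex.exp (c * t) := by
  have hInt : ∀ a b : ℝ, IntervalIntegrable φ volume a b := fun a b =>
    hc.intervalIntegrable a b
  set F : ℝ → ℂ := fun t => ∫ s in (0:ℝ)..t, φ s with hFdef
  have hF : ∀ t, HasDerivAt F (φ t) t := fun t =>
    (intervalIntegral.integral_hasStrictDerivAt_right (hInt 0 t)
      (hc.stronglyMeasurableAtFilter _ _) hc.continuousAt).hasDerivAt
  -- find h with F h ≠ 0
  obtain ⟨h, hFh⟩ : ∃ h : ℝ, F h ≠ 0 := by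
    by_contra hall
    push_neg at hall
    have : F = fun _ => (0:ℂ) := funext hall
    have h1 := (hF 0).unique (this ▸ hasDerivAt_const (0:ℝ) (0:ℂ))
    rw [h0] at h1; exact one_ne_zero h1
  have key : ∀ t : ℝ, F (t + h) - F t = φ t * F h := by
    intro t
    have h1 : F t + ∫ s in t..(t+h), φ s = F (t + h) :=
      intervalIntegral.integral_add_adjacent_intervals (hInt 0 t) (hInt t (t+h))
    have h2 : (∫ s in (0:ℝ)..h, φ (t + s)) = ∫ s in t..(t+h), φ s := by
      simpa using intervalIntegral.integral_comp_add_left φ t (a := 0) (b := h)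
    have h3 : (∫ s in (0:ℝ)..h, φ (t + s)) = φ t * F h := by
      simp_rw [hmul t]
      exact intervalIntegral.integral_const_mul _ _
    rw [← h1, ← h2, h3]; ring
  set c : ℂ := (φ h - 1) / F h with hcdef
  have hφeq : φ = fun t => (F (t + h) - F t) / F h := by
    funext t
    rw [key t, mul_div_assoc, div_self hFh, mul_one]
  have hd : ∀ t, HasDerivAt φ (c * φ t) t := by
    intro t
    have hD : HasDerivAt (fun t => (F (t + h) - F t) / F h) ((φ (t + h) - φ t) / F h) t :=
      (((hF (t+h)).comp_add_const t h).sub (hF t)).div_const _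
    have : (φ (t + h) - φ t) / F h = c * φ t := by
      rw [add_comm t h, hmul h t, hcdef]; field_simp
    rw [← this]
    exact hD.congr_of_eventuallyEq (Filter.Eventually.of_forall fun x => by
      show φ x = (F (x + h) - F x) / F h; rw [key x, mul_div_assoc, div_self hFh, mul_one])
  refine ⟨c, fun t => ?_⟩
  have hg : ∀ t : ℝ, HasDerivAt (fun t : ℝ => φ t * Complex.exp (-(c * t))) 0 t := by
    intro t
    have he : HasDerivAt (fun t : ℝ => Complex.exp (-(c * t)))
        (Complex.exp (-(c * t)) * (-c)) t := by
      have hi : HasDerivAt (fun t : ℝ => -(c * (t:ℂ))) (-c) t := by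
        have h0 := ((Complex.ofRealCLM.hasDerivAt (x := t)).const_mul c).neg
        convert h0 using 1
        · rfl
        · funext y; simp
        · simp
      exact hi.cexp
    have := (hd t).mul he
    convert this using 1
    · rfl
    · rfl
    · ring
  have hconst := is_const_of_deriv_eq_zero (f := fun t : ℝ => φ t * Complex.exp (-(c * t)))
    (fun t => (hg t).differentiableAt) (fun t => (hg t).deriv) t 0
  simp only [Complex.ofReal_zero, mul_zero, neg_zero, Complex.exp_zero, mul_one, h0] at hconst
  have := congrArg (· * Complex.exp (c * t)) hconst
  simpa [mul_assoc, ← Complex.exp_add] using this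

/-- Every continuous character `χ : ℂˣ → ℂˣ` is of the form
`χ(z) = [z]^l · |z|_ℂ^t = (z/|z|)^l · exp(t · log |z|²)` for a unique pair
`(l, t) ∈ ℤ × ℂ`. -/
theorem continuous_units_complex_char_eq
    (χ : ℂˣ →* ℂˣ) (hχ : Continuous χ) :
    ∃! p : ℤ × ℂ, ∀ z : ℂˣ,
      ((χ z : ℂ)) = ((z : ℂ) / (‖(z : ℂ)‖ : ℂ)) ^ p.1 *
        Complex.exp (p.2 * Real.log ((‖(z : ℂ)‖) ^ 2)) := by
  -- the two one-parameter subgroups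
  set u₁ : ℝ → ℂˣ := fun s => Units.mk0 (Complex.exp s) (Complex.exp_ne_zero _) with hu₁
  set u₂ : ℝ → ℂˣ := fun θ => Units.mk0 (Complex.exp (θ * Complex.I)) (Complex.exp_ne_zero _)
    with hu₂
  have hcu₁ : Continuous u₁ := by
    rw [Units.continuous_iff]
    constructor
    · exact Complex.continuous_exp.comp Complex.continuous_ofReal
    · refine Continuous.congr (f := fun s : ℝ => Complex.exp (-(s : ℂ))) (by fun_prop)
        fun s => ?_
      simp [hu₁, Complex.exp_neg]
  have hcu₂ : Continuous u₂ := by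
    rw [Units.continuous_iff]
    constructor
    · exact Complex.continuous_exp.comp (Complex.continuous_ofReal.mul continuous_const)
    · refine Continuous.congr (f := fun θ : ℝ => Complex.exp (-((θ : ℂ) * Complex.I)))
        (by fun_prop) fun s => ?_
      simp [hu₂, Complex.exp_neg]
  have hmul₁ : ∀ s t : ℝ, u₁ (s + t) = u₁ s * u₁ t := by
    intro s t
    apply Units.ext
    simp [hu₁, Complex.exp_add]
  have hmul₂ : ∀ s t : ℝ, u₂ (s + t) = u₂ s * u₂ t := by
    intro s t
    apply Units.ext
    simp [hu₂, ← Complex.exp_add, add_mul]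
  obtain ⟨c, hc⟩ := aux_hom_exp (fun s => ((χ (u₁ s) : ℂˣ) : ℂ))
    (Units.continuous_val.comp (hχ.comp hcu₁))
    (by simp [hu₁, show u₁ 0 = 1 from Units.ext (by simp [hu₁])])
    (fun s t => by rw [hmul₁ s t, map_mul, Units.val_mul])
  obtain ⟨b, hb⟩ := aux_hom_exp (fun θ => ((χ (u₂ θ) : ℂˣ) : ℂ))
    (Units.continuous_val.comp (hχ.comp hcu₂))
    (by simp [show u₂ 0 = 1 from Units.ext (by simp [hu₂])])
    (fun s t => by rw [hmul₂ s t, map_mul, Units.val_mul])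
  -- b = n * I for an integer n
  have hu₂per : u₂ (2 * Real.pi) = 1 := by
    apply Units.ext
    simp [hu₂, Complex.exp_two_pi_mul_I]
  have hb2π : Complex.exp (b * ((2 * Real.pi : ℝ) : ℂ)) = 1 := by
    have h := hb (2 * Real.pi)
    rw [hu₂per, map_one, Units.val_one] at h
    exact h.symm
  obtain ⟨n, hn⟩ := Complex.exp_eq_one_iff.mp hb2π
  push_cast at hn
  have hbval : b = n * Complex.I := by
    have h2 : (2 * (Real.pi : ℂ)) ≠ 0 := by
      simp [Real.pi_ne_zero]
    have h3 : b * (2 * (Real.pi : ℂ)) = (n * Complex.I) * (2 * (Real.pi : ℂ)) := by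
      rw [hn]; ring
    exact mul_right_cancel₀ h2 h3
  -- the main formula
  have main : ∀ z : ℂˣ, ((χ z : ℂ)) =
      ((z : ℂ) / (‖(z : ℂ)‖ : ℂ)) ^ (n : ℤ) *
        Complex.exp ((c / 2) * Real.log ((‖(z : ℂ)‖) ^ 2)) := by
    intro z
    set r : ℝ := ‖(z : ℂ)‖ with hrdef
    have hzne : (z : ℂ) ≠ 0 := Units.ne_zero z
    have hr : 0 < r := by
      rw [hrdef]; exact norm_pos_iff.mpr hzne
    have hz : (z : ℂˣ) = u₁ (Real.log r) * u₂ (Complex.arg (z : ℂ)) := by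
      apply Units.ext
      simp only [Units.val_mul, hu₁, hu₂, Units.val_mk0]
      rw [← Complex.ofReal_exp, Real.exp_log hr]
      exact (Complex.norm_mul_exp_arg_mul_I (z : ℂ)).symm
    have hdiv : (z : ℂ) / (r : ℂ) = Complex.exp (↑(Complex.arg (z : ℂ)) * Complex.I) := by
      rw [eq_comm, eq_div_iff (by exact_mod_cast hr.ne'), mul_comm]
      exact Complex.norm_mul_exp_arg_mul_I (z : ℂ)
    have hsplit : χ z = χ (u₁ (Real.log r)) * χ (u₂ (Complex.arg (z : ℂ))) := by
      rw [← map_mul, ← hz]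
    calc ((χ z : ℂ))
        = Complex.exp (c * Real.log r) * Complex.exp (b * Complex.arg (z : ℂ)) := by
          rw [hsplit, Units.val_mul, hc, hb]
      _ = ((z : ℂ) / (r : ℂ)) ^ (n : ℤ) *
          Complex.exp ((c / 2) * Real.log (r ^ 2)) := by
          rw [hdiv, ← Complex.exp_int_mul, ← Complex.exp_add, ← Complex.exp_add,
            Real.log_pow, hbval]
          push_cast
          ring_nf
  refine ⟨((n : ℤ), c / 2), main, ?_⟩
  rintro ⟨l', t'⟩ hp
  dsimp only at hp
  have habs₂ : ∀ θ : ℝ, ‖((u₂ θ : ℂˣ) : ℂ)‖ = 1 := fun θ => by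
    simp [hu₂, Complex.norm_exp_ofReal_mul_I]
  -- first coordinate
  have hl : l' = n := by
    by_contra hm
    have hmne : ((l' : ℝ) - (n : ℝ)) ≠ 0 := by
      rw [sub_ne_zero]
      exact_mod_cast hm
    set θ : ℝ := Real.pi / ((l' : ℝ) - (n : ℝ)) with hθ
    have h1 := hp (u₂ θ)
    have h2 := main (u₂ θ)
    rw [h2] at h1
    rw [habs₂ θ] at h1
    simp only [one_pow, Real.log_one, Complex.ofReal_zero, mul_zero, Complex.exp_zero,
      mul_one, Complex.ofReal_one, div_one] at h1
    have hane : Complex.exp ((θ : ℂ) * Complex.I) ≠ 0 := Complex.exp_ne_zero _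
    have hval : ((u₂ θ : ℂˣ) : ℂ) = Complex.exp ((θ : ℂ) * Complex.I) := by
      simp [hu₂]
    rw [hval] at h1
    have h3 : Complex.exp ((θ : ℂ) * Complex.I) ^ (l' - (n : ℤ)) = 1 := by
      rw [zpow_sub₀ hane, h1, div_self (zpow_ne_zero _ hane)]
    rw [← Complex.exp_int_mul] at h3
    have harg : ((l' - (n : ℤ) : ℤ) : ℂ) * ((θ : ℂ) * Complex.I) =
        (Real.pi : ℂ) * Complex.I := by
      have hne : ((l' : ℂ) - (n : ℂ)) ≠ 0 := by
        exact_mod_cast hmne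
      rw [hθ]
      push_cast
      field_simp
    rw [harg, Complex.exp_pi_mul_I] at h3
    norm_num at h3
  -- second coordinate
  have ht : t' = c / 2 := by
    by_contra hts
    set s : ℂ := 2 * t' - c with hs
    have hsne : s ≠ 0 := by
      rw [hs, sub_ne_zero]
      intro hcon
      apply hts
      linear_combination hcon / 2
    have hxall : ∀ x : ℝ, Complex.exp (s * x) = 1 := by
      intro x
      have h1 := hp (u₁ x)
      have h2 := main (u₁ x)
      rw [h2] at h1
      have habs₁ : ‖((u₁ x : ℂˣ) : ℂ)‖ = Real.exp x := by
        simp [hu₁, Complex.norm_exp]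
      have hval : ((u₁ x : ℂˣ) : ℂ) = Complex.exp ((x : ℝ) : ℂ) := by simp [hu₁]
      rw [habs₁, hval, Complex.ofReal_exp, div_self (Complex.exp_ne_zero _), one_zpow,
        one_zpow, one_mul, one_mul, Real.log_pow, Real.log_exp] at h1
      push_cast at h1
      have hrw : Complex.exp (s * x) =
          Complex.exp (t' * (2 * (x : ℂ))) / Complex.exp ((c / 2) * (2 * (x : ℂ))) := by
        rw [← Complex.exp_sub]
        congr 1
        rw [hs]
        ring
      rw [hrw, ← h1, div_self (Complex.exp_ne_zero _)]
    set x₀ : ℝ := Real.pi / ‖s‖ with hx₀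
    have hx₀pos : 0 < x₀ := div_pos Real.pi_pos (norm_pos_iff.mpr hsne)
    obtain ⟨k, hk⟩ := Complex.exp_eq_one_iff.mp (hxall x₀)
    have habs := congrArg (‖·‖) hk
    simp only [norm_mul, Complex.norm_real, Real.norm_eq_abs, Complex.norm_intCast, Complex.norm_I,
      Complex.norm_two, mul_one, abs_of_pos hx₀pos, abs_of_pos Real.pi_pos] at habs
    rw [hx₀, mul_div_cancel₀ _ (norm_pos_iff.mpr hsne).ne'] at habs
    rcases eq_or_ne k 0 with hk0 | hk0
    · rw [hk0] at habs
      simp at habs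
    · have hk1 : (1 : ℝ) ≤ |(k : ℝ)| := by
        rw [← Int.cast_abs]
        exact_mod_cast Int.one_le_abs hk0
      nlinarith [Real.pi_pos, abs_nonneg ((k : ℝ))]
  exact Prod.ext hl ht
end

section
/- Let ρ : ℂˣ → GL(n, ℂ) be a continuous group homomorphism which is completely reducible, i.e. every ρ-invariant linear subspace of ℂⁿ admits a ρ-invariant complement. Then ρ is simultaneously diagonalizable by characters of ℂˣ: there exist P ∈ GL(n, ℂ), integers l₁, …, l_n ∈ ℤ and complex numbers t₁, …, t_n ∈ ℂ such that for every z ∈ ℂˣ, P ρ(z) P⁻¹ is the diagonal matrix with diagonal entries (z/|z|)^{l_i} · exp(t_i · log(|z|²)), i = 1, …, n. -/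
open Complex intervalIntegral in
lemma oneParamSubgroup (f : ℝ → ℂ) (hc : Continuous f) (hne : ∀ x, f x ≠ 0)
    (hmul : ∀ x y, f (x + y) = f x * f y) :
    ∃ c : ℂ, ∀ x : ℝ, f x = Complex.exp (c * x) := by
  have hf0 : f 0 = 1 := by
    have h : f 0 * 1 = f 0 * f 0 := by rw [mul_one]; simpa using (hmul 0 0)
    exact (mul_left_cancel₀ (hne 0) h).symm
  obtain ⟨δ, hδpos, hδ⟩ : ∃ δ > 0, ∀ s : ℝ, |s| < δ → ‖f s - 1‖ < 1/2 := by
    obtain ⟨δ, hδpos, h⟩ :=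
      Metric.continuousAt_iff.mp (hc.continuousAt : ContinuousAt f 0) (1/2) (by norm_num)
    exact ⟨δ, hδpos, fun s hs => by
      have := h (x := s) (by simpa [Real.dist_eq] using hs)
      simpa [hf0, dist_eq_norm] using this⟩
  set a := δ / 2 with ha
  have hapos : 0 < a := by positivity
  set c₀ := ∫ s in (0:ℝ)..a, f s with hc₀
  have hint : ∀ u v : ℝ, IntervalIntegrable f MeasureTheory.volume u v :=
    fun u v => hc.intervalIntegrable u v
  have hc₀ne : c₀ ≠ 0 := by
    intro h0
    have hbound : ‖(∫ s in (0:ℝ)..a, (f s - 1))‖ ≤ (1/2) * |a - 0| := by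
      apply intervalIntegral.norm_integral_le_of_norm_le_const
      intro s hs
      rw [Set.uIoc_of_le hapos.le] at hs
      exact (hδ s (by rw [abs_of_pos hs.1]; linarith [hs.2])).le
    rw [intervalIntegral.integral_sub (hint 0 a) (intervalIntegrable_const)] at hbound
    simp [← hc₀, h0, abs_of_pos hapos] at hbound
    linarith
  have hkey : ∀ x : ℝ, (∫ s in x..(x+a), f s) = f x * c₀ := by
    intro x
    have h1 : (∫ s in (0:ℝ)..a, f (x + s)) = ∫ s in (x+0)..(x+a), f s :=
      intervalIntegral.integral_comp_add_left f x
    rw [add_zero] at h1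
    rw [← h1]
    calc (∫ s in (0:ℝ)..a, f (x + s)) = ∫ s in (0:ℝ)..a, f x * f s := by
          simp only [hmul]
      _ = f x * c₀ := intervalIntegral.integral_const_mul _ _
  set b := c₀⁻¹ * (f a - 1) with hb
  have hF : ∀ x : ℝ, HasDerivAt f (b * f x) x := by
    intro x
    have hFf : f = fun x => c₀⁻¹ * ((∫ s in (0:ℝ)..(x+a), f s) - ∫ s in (0:ℝ)..x, f s) := by
      funext y
      have := intervalIntegral.integral_add_adjacent_intervals (hint 0 y) (hint y (y+a))
      rw [← this, hkey y]
      field_simp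
      ring
    have hG : ∀ y : ℝ, HasDerivAt (fun u => ∫ s in (0:ℝ)..u, f s) (f y) y :=
      fun y => (hc.integral_hasStrictDerivAt 0 y).hasDerivAt
    have hi : HasDerivAt (fun u : ℝ => u + a) 1 x := (hasDerivAt_id x).add_const a
    have hshift : HasDerivAt (fun u : ℝ => ∫ s in (0:ℝ)..(u+a), f s) (f (x+a)) x := by
      exact HasDerivAt.comp_add_const x a (hG (x + a))
    have hd := ((hshift.sub (hG x)).const_mul c₀⁻¹)
    have heq : c₀⁻¹ * (f (x+a) - f x) = b * f x := by
      rw [add_comm, hmul, hb]; ring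
    rw [heq] at hd
    exact hd.congr_of_eventuallyEq
      (Filter.Eventually.of_forall fun y => congrFun hFf y)
  refine ⟨b, fun x => ?_⟩
  set g := fun x : ℝ => f x * Complex.exp (-(b * x)) with hg
  have hgderiv : ∀ x : ℝ, HasDerivAt g 0 x := by
    intro x
    have he : HasDerivAt (fun y : ℝ => Complex.exp (-(b * y))) (Complex.exp (-(b*x)) * (-b)) x := by
      have h1 : HasDerivAt (fun z : ℂ => Complex.exp (-(b * z))) (Complex.exp (-(b*x)) * (-b)) (x:ℂ) := by
        have hinner : HasDerivAt (fun z : ℂ => -(b * z)) (-b) (x:ℂ) := by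
          simpa using ((hasDerivAt_id (x:ℂ)).const_mul b).fun_neg
        exact (Complex.hasDerivAt_exp (-(b * (x:ℂ)))).comp (x:ℂ) hinner
      exact h1.comp_ofReal
    have := (hF x).fun_mul he
    exact this.congr_deriv (by ring)
  have hconst : g x = g 0 := by
    have hdiff : Differentiable ℝ g := fun y => (hgderiv y).differentiableAt
    have hderiv0 : ∀ y, deriv g y = 0 := fun y => (hgderiv y).deriv
    exact is_const_of_deriv_eq_zero hdiff hderiv0 x 0
  have hone : f x * Complex.exp (-(b * x)) = 1 := by
    simpa [hg, hf0] using hconst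
  rw [Complex.exp_neg, mul_inv_eq_one₀ (Complex.exp_ne_zero _)] at hone
  exact hone

open Complex in
lemma char_classification (χ : ℂˣ → ℂ) (hc : Continuous χ)
    (hne : ∀ z, χ z ≠ 0) (hmul : ∀ z w, χ (z * w) = χ z * χ w) :
    ∃ (l : ℤ) (t : ℂ), ∀ z : ℂˣ,
      χ z = ((z : ℂ) / (‖(z:ℂ)‖ : ℂ)) ^ l *
        Complex.exp (t * Real.log ((‖(z:ℂ)‖) ^ 2)) := by
  have hχ1 : χ 1 = 1 := by
    have h : χ 1 * 1 = χ 1 * χ 1 := by rw [mul_one]; simpa using (hmul 1 1)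
    exact (mul_left_cancel₀ (hne 1) h).symm
  set u : ℝ → ℂˣ := fun x => Units.mk0 (Complex.exp x) (Complex.exp_ne_zero _) with hu
  set v : ℝ → ℂˣ := fun θ => Units.mk0 (Complex.exp (θ * I)) (Complex.exp_ne_zero _) with hv
  have hucont : Continuous u := by
    apply Units.continuous_iff.mpr
    constructor
    · exact Complex.continuous_exp.comp continuous_ofReal
    · have : (fun x : ℝ => ((u x)⁻¹).val) = fun x : ℝ => Complex.exp (-x) := by
        funext x
        simp [hu, ← Complex.exp_neg]
      rw [this]
      exact Complex.continuous_exp.comp continuous_ofReal.neg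
  have hvcont : Continuous v := by
    apply Units.continuous_iff.mpr
    constructor
    · exact Complex.continuous_exp.comp (continuous_ofReal.mul continuous_const)
    · have : (fun θ : ℝ => ((v θ)⁻¹).val) = fun θ : ℝ => Complex.exp (-(θ * I)) := by
        funext θ
        simp [hv, ← Complex.exp_neg]
      rw [this]
      exact Complex.continuous_exp.comp (continuous_ofReal.mul continuous_const).neg
  obtain ⟨c₁, hc₁⟩ := oneParamSubgroup (χ ∘ u) (hc.comp hucont)
    (fun x => hne _)
    (fun x y => by
      have : u (x + y) = u x * u y := by
        ext; simp [hu, Complex.ofReal_add, Complex.exp_add]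
      simp only [Function.comp_apply, this, hmul])
  obtain ⟨c₂, hc₂⟩ := oneParamSubgroup (χ ∘ v) (hc.comp hvcont)
    (fun x => hne _)
    (fun x y => by
      have : v (x + y) = v x * v y := by
        ext; simp only [hv, Units.val_mk0, Units.val_mul]; push_cast
        rw [← Complex.exp_add]; ring_nf
      simp only [Function.comp_apply, this, hmul])
  -- periodicity gives c₂ = m * I
  have hv2π : v (2 * Real.pi) = 1 := by
    ext
    simp only [hv, Units.val_mk0, Units.val_one]
    push_cast
    rw [Complex.exp_eq_one_iff]
    exact ⟨1, by push_cast; ring⟩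
  obtain ⟨m, hm⟩ : ∃ m : ℤ, c₂ = m * I := by
    have h1 : Complex.exp (c₂ * (2 * Real.pi : ℝ)) = 1 := by
      rw [← hc₂ (2 * Real.pi)]
      simp [hv2π, hχ1]
    rw [Complex.exp_eq_one_iff] at h1
    obtain ⟨m, hm⟩ := h1
    refine ⟨m, ?_⟩
    have hπ : ((2 * Real.pi : ℝ) : ℂ) ≠ 0 := by
      push_cast
      simp [Real.pi_ne_zero]
    apply mul_right_cancel₀ hπ
    rw [hm]
    push_cast
    ring
  refine ⟨m, c₁ / 2, fun z => ?_⟩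
  have hzne : (z : ℂ) ≠ 0 := z.ne_zero
  set r := ‖(z : ℂ)‖ with hr
  have hrpos : 0 < r := norm_pos_iff.mpr hzne
  set θ := Complex.arg (z : ℂ) with hθ
  have hdecomp : z = v θ * u (Real.log r) := by
    ext
    simp only [hv, hu, Units.val_mul, Units.val_mk0]
    rw [← Complex.ofReal_exp, Real.exp_log hrpos]
    rw [mul_comm]
    exact (Complex.norm_mul_exp_arg_mul_I (z : ℂ)).symm
  have hχz : χ z = Complex.exp (c₂ * θ) * Complex.exp (c₁ * Real.log r) := by
    rw [hdecomp, hmul]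
    rw [show χ (v θ) = (χ ∘ v) θ from rfl, show χ (u (Real.log r)) = (χ ∘ u) (Real.log r) from rfl,
      hc₂, hc₁]
  have hfrac : (z : ℂ) / (r : ℂ) = Complex.exp (θ * I) := by
    rw [div_eq_iff (by exact_mod_cast hrpos.ne')]
    rw [mul_comm]
    exact (Complex.norm_mul_exp_arg_mul_I (z : ℂ)).symm
  rw [hχz, hfrac]
  congr 1
  · rw [← Complex.exp_int_mul]
    congr 1
    rw [hm]
    push_cast
    ring
  · congr 1
    rw [Real.log_pow]
    push_cast
    ring

open Matrix in
lemma exists_simul_eigenvector {n : ℕ} (ρ : ℂˣ →* GL (Fin n) ℂ)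
    (W : Submodule ℂ (Fin n → ℂ)) (hW : W ≠ ⊥)
    (hinv : ∀ z : ℂˣ, ∀ v ∈ W, ((ρ z : Matrix (Fin n) (Fin n) ℂ)).mulVec v ∈ W) :
    ∃ v ∈ W, v ≠ 0 ∧ ∀ z : ℂˣ, ∃ c : ℂ,
      ((ρ z : Matrix (Fin n) (Fin n) ℂ)).mulVec v = c • v := by
  have hcomm : ∀ z w : ℂˣ,
      (ρ z : Matrix (Fin n) (Fin n) ℂ) * (ρ w : Matrix (Fin n) (Fin n) ℂ)
        = (ρ w : Matrix (Fin n) (Fin n) ℂ) * (ρ z : Matrix (Fin n) (Fin n) ℂ) := by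
    intro z w
    have h1 : ((ρ z * ρ w : GL (Fin n) ℂ) : Matrix (Fin n) (Fin n) ℂ)
        = ((ρ w * ρ z : GL (Fin n) ℂ) : Matrix (Fin n) (Fin n) ℂ) := by
      rw [← _root_.map_mul, ← _root_.map_mul, mul_comm]
    simpa using h1
  suffices h : ∀ k, ∀ W : Submodule ℂ (Fin n → ℂ), Module.finrank ℂ W ≤ k → W ≠ ⊥ →
      (∀ z : ℂˣ, ∀ v ∈ W, ((ρ z : Matrix (Fin n) (Fin n) ℂ)).mulVec v ∈ W) →
      ∃ v ∈ W, v ≠ 0 ∧ ∀ z : ℂˣ, ∃ c : ℂ,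
        ((ρ z : Matrix (Fin n) (Fin n) ℂ)).mulVec v = c • v by
    exact h (Module.finrank ℂ W) W le_rfl hW hinv
  intro k
  induction k with
  | zero =>
    intro W hk hW _
    exact absurd (Submodule.finrank_eq_zero.mp (Nat.le_zero.mp hk)) hW
  | succ k ih =>
    intro W hk hW hinv
    by_cases hscal : ∀ z : ℂˣ, ∃ c : ℂ, ∀ v ∈ W,
        ((ρ z : Matrix (Fin n) (Fin n) ℂ)).mulVec v = c • v
    · obtain ⟨v, hvW, hv0⟩ := Submodule.exists_mem_ne_zero_of_ne_bot hW
      exact ⟨v, hvW, hv0, fun z => (hscal z).imp fun c hc => hc v hvW⟩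
    · push_neg at hscal
      obtain ⟨z₀, hz₀⟩ := hscal
      set f : (Fin n → ℂ) →ₗ[ℂ] (Fin n → ℂ) :=
        Matrix.mulVecLin (ρ z₀ : Matrix (Fin n) (Fin n) ℂ) with hf
      have hfW : ∀ v ∈ W, f v ∈ W := fun v hv => hinv z₀ v hv
      set T : Module.End ℂ W := f.restrict hfW with hT
      haveI : Nontrivial W := Submodule.nontrivial_iff_ne_bot.mpr hW
      obtain ⟨μ, hμ⟩ := Module.End.exists_eigenvalue T
      obtain ⟨w, hw⟩ := hμ.exists_hasEigenvector
      set E := W ⊓ LinearMap.ker (f - μ • LinearMap.id) with hE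
      have hmemE : ∀ v, v ∈ E ↔ v ∈ W ∧ f v = μ • v := by
        intro v
        simp [hE, LinearMap.mem_ker, sub_eq_zero, LinearMap.sub_apply, LinearMap.smul_apply]
      have hwE : (w : Fin n → ℂ) ∈ E := by
        rw [hmemE]
        refine ⟨w.2, ?_⟩
        have h1 : T w = μ • w := hw.apply_eq_smul
        have h2 : (T w : Fin n → ℂ) = f w := rfl
        rw [← h2, h1]
        rfl
      have hEbot : E ≠ ⊥ := by
        intro h
        have : (w : Fin n → ℂ) = 0 := by rw [h] at hwE; simpa using hwE
        exact hw.2 (Submodule.coe_eq_zero.mp this)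
      have hEltW : E < W := by
        refine lt_of_le_of_ne inf_le_left ?_
        intro h
        obtain ⟨v, hvW, hvne⟩ := hz₀ μ
        have : v ∈ E := h ▸ hvW
        rw [hmemE] at this
        exact hvne (by rw [← this.2]; simp [hf, Matrix.mulVecLin_apply])
      have hEk : Module.finrank ℂ E ≤ k := by
        have := Submodule.finrank_lt_finrank_of_lt hEltW
        omega
      have hEinv : ∀ z : ℂˣ, ∀ v ∈ E, ((ρ z : Matrix (Fin n) (Fin n) ℂ)).mulVec v ∈ E := by
        intro z v hv
        rw [hmemE] at hv ⊢
        refine ⟨hinv z v hv.1, ?_⟩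
        have hfv : f (((ρ z : Matrix (Fin n) (Fin n) ℂ)).mulVec v)
            = ((ρ z : Matrix (Fin n) (Fin n) ℂ)).mulVec (f v) := by
          simp only [hf, Matrix.mulVecLin_apply, Matrix.mulVec_mulVec]
          rw [hcomm z₀ z]
        rw [hfv, hv.2, Matrix.mulVec_smul]
      obtain ⟨v, hvE, hv0, hvc⟩ := ih E hEk hEbot hEinv
      exact ⟨v, (inf_le_left : E ≤ W) hvE, hv0, hvc⟩

open Matrix in
lemma exists_eigenbasis {n : ℕ} (ρ : ℂˣ →* GL (Fin n) ℂ)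
    (hsemi : ∀ W : Submodule ℂ (Fin n → ℂ),
      (∀ (z : ℂˣ), ∀ v ∈ W, (ρ z : Matrix (Fin n) (Fin n) ℂ).mulVec v ∈ W) →
      ∃ W' : Submodule ℂ (Fin n → ℂ),
        (∀ (z : ℂˣ), ∀ v ∈ W', (ρ z : Matrix (Fin n) (Fin n) ℂ).mulVec v ∈ W') ∧
        IsCompl W W') :
    ∃ b : Module.Basis (Fin n) ℂ (Fin n → ℂ), ∀ i : Fin n, ∀ z : ℂˣ, ∃ c : ℂ,
      ((ρ z : Matrix (Fin n) (Fin n) ℂ)).mulVec (b i) = c • (b i) := by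
  set S : Set (Fin n → ℂ) :=
    {v | ∀ z : ℂˣ, ∃ c : ℂ, ((ρ z : Matrix (Fin n) (Fin n) ℂ)).mulVec v = c • v} with hS
  set E := Submodule.span ℂ S with hE
  have hEinv : ∀ z : ℂˣ, ∀ v ∈ E, ((ρ z : Matrix (Fin n) (Fin n) ℂ)).mulVec v ∈ E := by
    intro z
    have hle : E ≤ Submodule.comap (Matrix.mulVecLin (ρ z : Matrix (Fin n) (Fin n) ℂ)) E := by
      rw [hE]
      apply Submodule.span_le.mpr
      intro v hv
      rw [SetLike.mem_coe, Submodule.mem_comap, Matrix.mulVecLin_apply]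
      obtain ⟨c, hc⟩ := hv z
      rw [hc]
      exact E.smul_mem c (Submodule.subset_span hv)
    intro v hv
    have := hle hv
    simpa [Matrix.mulVecLin_apply] using this
  have hspan : E = ⊤ := by
    by_contra hne
    obtain ⟨W', hW'inv, hcompl⟩ := hsemi E hEinv
    have hW'ne : W' ≠ ⊥ := by
      intro h
      rw [h] at hcompl
      exact hne (by simpa using hcompl.sup_eq_top)
    obtain ⟨v, hvW', hv0, hvc⟩ := exists_simul_eigenvector ρ W' hW'ne hW'inv
    have hvE : v ∈ E := Submodule.subset_span hvc
    have : v ∈ E ⊓ W' := ⟨hvE, hvW'⟩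
    rw [hcompl.inf_eq_bot] at this
    exact hv0 (by simpa using this)
  obtain ⟨b, hbS, hbspan, hbli⟩ := exists_linearIndependent ℂ S
  rw [← hE, hspan] at hbspan
  have hfin : b.Finite := hbli.setFinite
  haveI := hfin.fintype
  let β : Module.Basis b ℂ (Fin n → ℂ) :=
    Module.Basis.mk hbli (by rw [Subtype.range_coe]; exact hbspan.ge)
  have hcard : Fintype.card b = n := by
    have h1 := Module.finrank_eq_card_basis β
    rw [Module.finrank_fin_fun] at h1
    exact h1.symm
  let e : b ≃ Fin n := Fintype.equivFinOfCardEq hcard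
  refine ⟨β.reindex e, fun i z => ?_⟩
  have h1 : (β.reindex e) i = β (e.symm i) := β.reindex_apply e i
  have h2 : β (e.symm i) = ((e.symm i : b) : Fin n → ℂ) := Module.Basis.mk_apply hbli _ _
  have h3 : ((e.symm i : b) : Fin n → ℂ) ∈ S := hbS (e.symm i).2
  rw [h1, h2]
  exact h3 z

/-- A continuous, completely reducible representation `ρ : ℂˣ → GL(n, ℂ)` is
simultaneously diagonalizable, with diagonal entries the characters
`z ↦ (z/|z|)^{lᵢ} · exp(tᵢ · log |z|²)` of `ℂˣ`. -/
theorem continuous_semisimple_rep_units_complex_diagonalizable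
    {n : ℕ} (ρ : ℂˣ →* GL (Fin n) ℂ)
    (hcont : Continuous fun z : ℂˣ => (ρ z : Matrix (Fin n) (Fin n) ℂ))
    (hsemi : ∀ W : Submodule ℂ (Fin n → ℂ),
      (∀ (z : ℂˣ), ∀ v ∈ W, (ρ z : Matrix (Fin n) (Fin n) ℂ).mulVec v ∈ W) →
      ∃ W' : Submodule ℂ (Fin n → ℂ),
        (∀ (z : ℂˣ), ∀ v ∈ W', (ρ z : Matrix (Fin n) (Fin n) ℂ).mulVec v ∈ W') ∧
        IsCompl W W') :
    ∃ (P : GL (Fin n) ℂ) (l : Fin n → ℤ) (t : Fin n → ℂ),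
      ∀ z : ℂˣ,
        (P : Matrix (Fin n) (Fin n) ℂ) * (ρ z : Matrix (Fin n) (Fin n) ℂ) *
            ((P⁻¹ : GL (Fin n) ℂ) : Matrix (Fin n) (Fin n) ℂ)
          = Matrix.diagonal (fun i =>
              ((z : ℂ) / (‖(z : ℂ)‖ : ℂ)) ^ (l i) *
                Complex.exp (t i * Real.log ((‖(z : ℂ)‖) ^ 2))) := by
  obtain ⟨β, hβ⟩ := exists_eigenbasis ρ hsemi
  choose χ hχ using hβ
  have hβne : ∀ i, β i ≠ 0 := fun i => β.ne_zero i
  -- the change of basis matrix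
  set M : Matrix (Fin n) (Fin n) ℂ := (Pi.basisFun ℂ (Fin n)).toMatrix ⇑β with hM
  haveI : Invertible M := (Pi.basisFun ℂ (Fin n)).invertibleToMatrix β
  have hMentry : ∀ i j, M i j = β j i := by
    intro i j
    rw [hM, Module.Basis.toMatrix_apply, Pi.basisFun_repr]
  -- key conjugation identity
  have hkey : ∀ z : ℂˣ, (ρ z : Matrix (Fin n) (Fin n) ℂ) * M
      = M * Matrix.diagonal (fun i => χ i z) := by
    intro z
    ext i j
    rw [Matrix.mul_apply, Matrix.mul_diagonal]
    have h1 : ∑ k, (ρ z : Matrix (Fin n) (Fin n) ℂ) i k * M k j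
        = ((ρ z : Matrix (Fin n) (Fin n) ℂ)).mulVec (β j) i := by
      rw [Matrix.mulVec]
      simp only [dotProduct, hMentry]
    rw [h1, hχ j z]
    simp [hMentry, mul_comm]
  have hdiag : ∀ z : ℂˣ, ⅟M * (ρ z : Matrix (Fin n) (Fin n) ℂ) * M
      = Matrix.diagonal (fun i => χ i z) := by
    intro z
    rw [Matrix.mul_assoc, hkey, ← Matrix.mul_assoc, invOf_mul_self, Matrix.one_mul]
  -- χ i is a continuous character
  have hχcont : ∀ i, Continuous fun z : ℂˣ => χ i z := by
    intro i
    have h1 : Continuous fun z : ℂˣ => ⅟M * (ρ z : Matrix (Fin n) (Fin n) ℂ) * M :=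
      (continuous_const.matrix_mul hcont).matrix_mul continuous_const
    have h2 : (fun z : ℂˣ => χ i z)
        = fun z : ℂˣ => (⅟M * (ρ z : Matrix (Fin n) (Fin n) ℂ) * M) i i := by
      funext z
      rw [hdiag z, Matrix.diagonal_apply_eq]
    rw [h2]
    exact (continuous_apply i).comp ((continuous_apply i).comp h1)
  have hχne : ∀ i, ∀ z : ℂˣ, χ i z ≠ 0 := by
    intro i z h0
    have h1 : ((ρ z : Matrix (Fin n) (Fin n) ℂ)).mulVec (β i) = 0 := by
      rw [hχ i z, h0, zero_smul]
    have h2 : β i = 0 := by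
      have h3 := congrArg (fun v => ((ρ z⁻¹ : Matrix (Fin n) (Fin n) ℂ)).mulVec v) h1
      simp only [Matrix.mulVec_mulVec] at h3
      have h4 : (ρ z⁻¹ : Matrix (Fin n) (Fin n) ℂ) * (ρ z : Matrix (Fin n) (Fin n) ℂ)
          = (1 : Matrix (Fin n) (Fin n) ℂ) := by
        have := congrArg (fun g : GL (Fin n) ℂ => (g : Matrix (Fin n) (Fin n) ℂ))
          (inv_mul_cancel (ρ z))
        simpa [← _root_.map_inv] using this
      rw [h4, Matrix.one_mulVec, Matrix.mulVec_zero] at h3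
      exact h3
    exact hβne i h2
  have hχmul : ∀ i, ∀ z w : ℂˣ, χ i (z * w) = χ i z * χ i w := by
    intro i z w
    have h1 : ((ρ (z * w) : Matrix (Fin n) (Fin n) ℂ)).mulVec (β i)
        = (χ i z * χ i w) • β i := by
      have hzw : (ρ (z * w) : Matrix (Fin n) (Fin n) ℂ)
          = (ρ z : Matrix (Fin n) (Fin n) ℂ) * (ρ w : Matrix (Fin n) (Fin n) ℂ) := by
        rw [_root_.map_mul]; rfl
      rw [hzw, ← Matrix.mulVec_mulVec, hχ i w, Matrix.mulVec_smul, hχ i z,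
        smul_smul, mul_comm (χ i w)]
    have h2 := (hχ i (z * w)).symm.trans h1
    exact smul_left_injective ℂ (hβne i) h2
  choose l t hlt using fun i => char_classification (χ i) (hχcont i) (hχne i) (hχmul i)
  -- build P
  set u : GL (Fin n) ℂ := unitOfInvertible M with hu
  refine ⟨u⁻¹, l, t, fun z => ?_⟩
  have hP : ((u⁻¹ : GL (Fin n) ℂ) : Matrix (Fin n) (Fin n) ℂ) = ⅟M := rfl
  have hPinv : (((u⁻¹)⁻¹ : GL (Fin n) ℂ) : Matrix (Fin n) (Fin n) ℂ) = M := by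
    rw [inv_inv]; rfl
  rw [hP, hPinv, hdiag z]
  have heq : (fun i => χ i z) = fun i =>
      ((z : ℂ) / (‖(z : ℂ)‖ : ℂ)) ^ (l i) *
        Complex.exp (t i * Real.log ((‖(z : ℂ)‖) ^ 2)) :=
    funext fun i => hlt i z
  rw [heq]
end

section
/- Let K = ℝ((t)) and L = ℂ((s)) be the fields of formal Laurent series over ℝ and ℂ respectively, and embed K into L by the field homomorphism that acts as the inclusion ℝ ↪ ℂ on coefficients and sends t to s². Then L is a Galois extension of (the image of) K of degree 4, and the Galois group Gal(L/K) is isomorphic to ℤ/2 × ℤ/2 (the Klein four-group). -/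
open HahnSeries

noncomputable section KleinFourAux

/-! ### The substitution `s ↦ -s` and coefficientwise conjugation on `ℂ((s))` -/

/-- The substitution `s ↦ -s` on complex Laurent series, as a function. -/
def negFun (f : LaurentSeries ℂ) : LaurentSeries ℂ where
  coeff n := (-1 : ℂ) ^ n * f.coeff n
  isPWO_support' := f.isPWO_support.mono (fun n hn => by
    simp only [Function.mem_support, ne_eq] at hn ⊢
    intro h
    exact hn (by rw [h, mul_zero]))

@[simp] lemma negFun_coeff (f : LaurentSeries ℂ) (n : ℤ) :
    (negFun f).coeff n = (-1 : ℂ) ^ n * f.coeff n := rfl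

lemma negFun_support (f : LaurentSeries ℂ) : (negFun f).support = f.support := by
  ext n
  simp only [HahnSeries.mem_support, negFun_coeff, ne_eq, mul_eq_zero, not_or]
  constructor
  · exact fun h => h.2
  · intro h
    exact ⟨fun h1 => by simpa using zpow_ne_zero n (by norm_num : (-1 : ℂ) ≠ 0) h1, h⟩

lemma negFun_mul (x y : LaurentSeries ℂ) : negFun (x * y) = negFun x * negFun y := by
  ext n
  have hset : Finset.antidiagonal (negFun x).isPWO_support (negFun y).isPWO_support n
      = Finset.antidiagonal x.isPWO_support y.isPWO_support n := by
    ext ij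
    simp only [Finset.mem_addAntidiagonal, negFun_support]
  rw [negFun_coeff, HahnSeries.coeff_mul, HahnSeries.coeff_mul, hset, Finset.mul_sum]
  refine Finset.sum_congr rfl (fun ij hij => ?_)
  rw [Finset.mem_addAntidiagonal] at hij
  rw [negFun_coeff, negFun_coeff, ← hij.2.2, zpow_add₀ (by norm_num : (-1 : ℂ) ≠ 0)]
  ring

/-- The substitution `s ↦ -s` as a ring homomorphism. -/
def negHom : LaurentSeries ℂ →+* LaurentSeries ℂ where
  toFun := negFun
  map_one' := by
    ext n
    simp only [negFun_coeff, HahnSeries.coeff_one]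
    split_ifs with h
    · subst h; simp
    · simp
  map_mul' := negFun_mul
  map_zero' := by ext n; simp
  map_add' x y := by ext n; simp [mul_add]

lemma negFun_negFun (f : LaurentSeries ℂ) : negFun (negFun f) = f := by
  ext n
  simp only [negFun_coeff, ← mul_assoc, ← zpow_add₀ (by norm_num : (-1 : ℂ) ≠ 0)]
  rw [← two_mul, zpow_mul]
  norm_num

/-- The coefficientwise complex conjugation as a ring homomorphism. -/
def conjHom : LaurentSeries ℂ →+* LaurentSeries ℂ where
  toFun f := f.map (starRingEnd ℂ)
  map_one' := HahnSeries.map_one (starRingEnd ℂ).toMonoidWithZeroHom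
  map_mul' x y := HahnSeries.map_mul (starRingEnd ℂ).toNonUnitalRingHom
  map_zero' := by ext n; simp [HahnSeries.map_coeff]
  map_add' x y := HahnSeries.map_add (starRingEnd ℂ).toAddMonoidHom

@[simp] lemma conjHom_coeff (f : LaurentSeries ℂ) (n : ℤ) :
    (conjHom f).coeff n = (starRingEnd ℂ) (f.coeff n) := by
  rfl

lemma conjHom_conjHom (f : LaurentSeries ℂ) : conjHom (conjHom f) = f := by
  ext n; simp

/-- The substitution `s ↦ -s` as a ring isomorphism. -/
def negRE : LaurentSeries ℂ ≃+* LaurentSeries ℂ :=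
  { negHom with invFun := negFun, left_inv := negFun_negFun, right_inv := negFun_negFun }

/-- The coefficientwise conjugation as a ring isomorphism. -/
def conjRE : LaurentSeries ℂ ≃+* LaurentSeries ℂ :=
  { conjHom with invFun := conjHom, left_inv := conjHom_conjHom, right_inv := conjHom_conjHom }

@[simp] lemma negRE_coeff (f : LaurentSeries ℂ) (n : ℤ) :
    (negRE f).coeff n = (-1 : ℂ) ^ n * f.coeff n := rfl

@[simp] lemma conjRE_coeff (f : LaurentSeries ℂ) (n : ℤ) :
    (conjRE f).coeff n = (starRingEnd ℂ) (f.coeff n) := by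
  simp [conjRE]

/-! ### Monoid homomorphisms out of `Multiplicative (ZMod 2)` -/

/-- A monoid hom from `Multiplicative (ZMod 2)` determined by an element of order dividing 2. -/
def zmod2Hom {A : Type*} [Monoid A] (a : A) (ha : a * a = 1) :
    Multiplicative (ZMod 2) →* A where
  toFun x := a ^ (Multiplicative.toAdd x).val
  map_one' := by simp
  map_mul' x y := by
    have key : ∀ n : ℕ, a ^ (n % 2) = a ^ n := by
      intro n
      conv_rhs => rw [← Nat.div_add_mod n 2]
      rw [_root_.pow_add, pow_mul, (show a ^ 2 = 1 by rw [pow_two, ha]), one_pow, one_mul]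
    show a ^ (Multiplicative.toAdd (x * y)).val = _
    rw [toAdd_mul, ZMod.val_add, key, _root_.pow_add]

lemma zmod2_cases (x : Multiplicative (ZMod 2)) :
    x = Multiplicative.ofAdd 0 ∨ x = Multiplicative.ofAdd 1 := by
  rcases (by decide : ∀ y : ZMod 2, y = 0 ∨ y = 1) (Multiplicative.toAdd x) with h | h
  · left; rw [← ofAdd_toAdd x, h]
  · right; rw [← ofAdd_toAdd x, h]

lemma zmod2Hom_ofAdd_zero {A : Type*} [Monoid A] (a : A) (ha : a * a = 1) :
    zmod2Hom a ha (Multiplicative.ofAdd 0) = 1 := by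
  simp [zmod2Hom]

lemma zmod2Hom_ofAdd_one {A : Type*} [Monoid A] (a : A) (ha : a * a = 1) :
    zmod2Hom a ha (Multiplicative.ofAdd 1) = a := by
  simp [zmod2Hom, ZMod.val_one]

/-! ### The decomposition of `ℂ((s))` over `ℝ((t))` -/

lemma supp_bddBelow (g : LaurentSeries ℂ) : BddBelow g.support := by
  rcases Set.eq_empty_or_nonempty g.support with h | h
  · rw [h]; exact bddBelow_empty
  · exact ⟨g.isWF_support.min h, fun n hn => g.isWF_support.min_le h hn⟩

variable (ι : LaurentSeries ℝ →+* LaurentSeries ℂ)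

/-- The decomposition map `(f₀,f₁,f₂,f₃) ↦ ι f₀ + ι f₁ · s + ι f₂ · i + ι f₃ · i s`. -/
def Phi (f : Fin 4 → LaurentSeries ℝ) : LaurentSeries ℂ :=
  ι (f 0) + ι (f 1) * single 1 1 + ι (f 2) * single 0 Complex.I
    + ι (f 3) * single 1 Complex.I

variable (hι : ∀ (f : LaurentSeries ℝ) (m : ℤ),
      (ι f).coeff (2 * m) = ((f.coeff m : ℝ) : ℂ) ∧ (ι f).coeff (2 * m + 1) = 0)

include hι

lemma iota_coeff_odd' (f : LaurentSeries ℝ) (m : ℤ) : (ι f).coeff (2 * m - 1) = 0 := by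
  have := (hι f (m - 1)).2
  rwa [show 2 * (m - 1) + 1 = 2 * m - 1 by ring] at this

lemma Phi_coeff_even (f : Fin 4 → LaurentSeries ℝ) (m : ℤ) :
    (Phi ι f).coeff (2 * m) = ((f 0).coeff m : ℂ) + ((f 2).coeff m : ℂ) * Complex.I := by
  have h1 : (ι (f 1) * single 1 (1 : ℂ)).coeff (2 * m) = 0 := by
    rw [show (2 * m : ℤ) = (2 * m - 1) + 1 by ring, HahnSeries.coeff_mul_single_add,
      iota_coeff_odd' ι hι, zero_mul]
  have h3 : (ι (f 3) * single 1 Complex.I).coeff (2 * m) = 0 := by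
    rw [show (2 * m : ℤ) = (2 * m - 1) + 1 by ring, HahnSeries.coeff_mul_single_add,
      iota_coeff_odd' ι hι, zero_mul]
  have h2 : (ι (f 2) * single 0 Complex.I).coeff (2 * m)
      = ((f 2).coeff m : ℂ) * Complex.I := by
    rw [HahnSeries.coeff_mul_single_zero, (hι (f 2) m).1]
  simp only [Phi, HahnSeries.coeff_add, h1, h2, h3, (hι (f 0) m).1, add_zero, zero_add]

lemma Phi_coeff_odd (f : Fin 4 → LaurentSeries ℝ) (m : ℤ) :
    (Phi ι f).coeff (2 * m + 1)
      = ((f 1).coeff m : ℂ) + ((f 3).coeff m : ℂ) * Complex.I := by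
  have h1 : (ι (f 1) * single 1 (1 : ℂ)).coeff (2 * m + 1) = ((f 1).coeff m : ℂ) := by
    rw [show (2 * m + 1 : ℤ) = 2 * m + 1 from rfl, HahnSeries.coeff_mul_single_add,
      (hι (f 1) m).1, mul_one]
  have h3 : (ι (f 3) * single 1 Complex.I).coeff (2 * m + 1)
      = ((f 3).coeff m : ℂ) * Complex.I := by
    rw [HahnSeries.coeff_mul_single_add, (hι (f 3) m).1]
  have h2 : (ι (f 2) * single 0 Complex.I).coeff (2 * m + 1) = 0 := by
    rw [HahnSeries.coeff_mul_single_zero, (hι (f 2) m).2, zero_mul]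
  simp only [Phi, HahnSeries.coeff_add, h1, h2, h3, (hι (f 0) m).2, add_zero, zero_add]

lemma Phi_injective : Function.Injective (Phi ι) := by
  intro f g hfg
  have key : ∀ n : ℤ, (Phi ι f).coeff n = (Phi ι g).coeff n := fun n => by rw [hfg]
  have hmain : ∀ m : ℤ, ((f 0).coeff m = (g 0).coeff m ∧ (f 2).coeff m = (g 2).coeff m)
      ∧ ((f 1).coeff m = (g 1).coeff m ∧ (f 3).coeff m = (g 3).coeff m) := by
    intro m
    have he := key (2 * m)
    have ho := key (2 * m + 1)
    rw [Phi_coeff_even ι hι, Phi_coeff_even ι hι] at he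
    rw [Phi_coeff_odd ι hι, Phi_coeff_odd ι hι] at ho
    simp only [Complex.ext_iff, Complex.add_re, Complex.ofReal_re, Complex.mul_re,
      Complex.I_re, Complex.I_im, Complex.ofReal_im, Complex.add_im, Complex.mul_im] at he ho
    exact ⟨⟨by linarith [he.1, he.2], by linarith [he.1, he.2]⟩,
      ⟨by linarith [ho.1, ho.2], by linarith [ho.1, ho.2]⟩⟩
  funext j
  fin_cases j
  · exact HahnSeries.coeff_inj.mp (funext fun m => (hmain m).1.1)
  · exact HahnSeries.coeff_inj.mp (funext fun m => (hmain m).2.1)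
  · exact HahnSeries.coeff_inj.mp (funext fun m => (hmain m).1.2)
  · exact HahnSeries.coeff_inj.mp (funext fun m => (hmain m).2.2)

lemma Phi_surjective : Function.Surjective (Phi ι) := by
  intro g
  obtain ⟨c, hc⟩ := supp_bddBelow g
  have mk : ∀ (u : ℤ → ℝ), (∀ m, u m ≠ 0 → g.coeff (2 * m) ≠ 0 ∨ g.coeff (2 * m + 1) ≠ 0) →
      BddBelow (Function.support u) := by
    intro u hu
    refine ⟨min c 0, fun m hm => ?_⟩
    rcases hu m hm with h | h
    · have := hc h; omega
    · have := hc h; omega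
  set u0 : ℤ → ℝ := fun m => (g.coeff (2 * m)).re with hu0
  set u1 : ℤ → ℝ := fun m => (g.coeff (2 * m + 1)).re with hu1
  set u2 : ℤ → ℝ := fun m => (g.coeff (2 * m)).im with hu2
  set u3 : ℤ → ℝ := fun m => (g.coeff (2 * m + 1)).im with hu3
  have h0 : ∀ m, u0 m ≠ 0 → g.coeff (2 * m) ≠ 0 ∨ g.coeff (2 * m + 1) ≠ 0 :=
    fun m hm => Or.inl (fun h => hm (by rw [hu0]; simp [h]))
  have h1 : ∀ m, u1 m ≠ 0 → g.coeff (2 * m) ≠ 0 ∨ g.coeff (2 * m + 1) ≠ 0 :=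
    fun m hm => Or.inr (fun h => hm (by rw [hu1]; simp [h]))
  have h2 : ∀ m, u2 m ≠ 0 → g.coeff (2 * m) ≠ 0 ∨ g.coeff (2 * m + 1) ≠ 0 :=
    fun m hm => Or.inl (fun h => hm (by rw [hu2]; simp [h]))
  have h3 : ∀ m, u3 m ≠ 0 → g.coeff (2 * m) ≠ 0 ∨ g.coeff (2 * m + 1) ≠ 0 :=
    fun m hm => Or.inr (fun h => hm (by rw [hu3]; simp [h]))
  refine ⟨![HahnSeries.ofSuppBddBelow u0 (mk u0 h0), HahnSeries.ofSuppBddBelow u1 (mk u1 h1),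
    HahnSeries.ofSuppBddBelow u2 (mk u2 h2), HahnSeries.ofSuppBddBelow u3 (mk u3 h3)], ?_⟩
  ext n
  rcases Int.even_or_odd' n with ⟨m, hm | hm⟩
  · subst hm
    rw [Phi_coeff_even ι hι]
    exact Complex.re_add_im _
  · subst hm
    rw [Phi_coeff_odd ι hι]
    exact Complex.re_add_im _

end KleinFourAux

/-- Embed `K = ℝ((t))` into `L = ℂ((s))` by the field homomorphism `ι` acting
as the inclusion `ℝ ↪ ℂ` on coefficients and sending `t` to `s²` (so the
coefficient of `ι f` at `2m` is the coefficient of `f` at `m`, and the odd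
coefficients vanish).  Then `L/K` is a Galois extension of degree 4 whose
Galois group is the Klein four-group `ℤ/2 × ℤ/2`. -/
theorem complex_laurent_over_real_laurent_klein_four
    (ι : LaurentSeries ℝ →+* LaurentSeries ℂ)
    (hι : ∀ (f : LaurentSeries ℝ) (m : ℤ),
      (ι f).coeff (2 * m) = ((f.coeff m : ℝ) : ℂ) ∧ (ι f).coeff (2 * m + 1) = 0)
    [alg : Algebra (LaurentSeries ℝ) (LaurentSeries ℂ)]
    (halg : algebraMap (LaurentSeries ℝ) (LaurentSeries ℂ) = ι) :
    IsGalois (LaurentSeries ℝ) (LaurentSeries ℂ) ∧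
      Module.finrank (LaurentSeries ℝ) (LaurentSeries ℂ) = 4 ∧
      Nonempty ((LaurentSeries ℂ ≃ₐ[LaurentSeries ℝ] LaurentSeries ℂ) ≃*
        (Multiplicative (ZMod 2) × Multiplicative (ZMod 2))) := by
  classical
  set sL : LaurentSeries ℂ := HahnSeries.single 1 1 with hsL
  set iL : LaurentSeries ℂ := HahnSeries.single 0 Complex.I with hiL
  -- automorphisms fix the image of ι pointwise
  have fixρ : ∀ (ρ : LaurentSeries ℂ ≃ₐ[LaurentSeries ℝ] LaurentSeries ℂ)
      (g : LaurentSeries ℝ), ρ (ι g) = ι g := fun ρ g => by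
    rw [← halg]; exact ρ.commutes g
  -- the degree-4 linear decomposition
  let PhiL : (Fin 4 → LaurentSeries ℝ) →ₗ[LaurentSeries ℝ] LaurentSeries ℂ :=
    { toFun := Phi ι
      map_add' := fun f g => by
        simp only [Phi, Pi.add_apply, map_add, add_mul]
        ring
      map_smul' := fun a f => by
        simp only [Phi, Pi.smul_apply, smul_eq_mul, map_mul, Algebra.smul_def, halg,
          RingHom.id_apply]
        ring }
  let eL : (Fin 4 → LaurentSeries ℝ) ≃ₗ[LaurentSeries ℝ] LaurentSeries ℂ :=
    LinearEquiv.ofBijective PhiL ⟨Phi_injective ι hι, Phi_surjective ι hι⟩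
  haveI fd : FiniteDimensional (LaurentSeries ℝ) (LaurentSeries ℂ) :=
    Module.Finite.equiv eL
  have hrank : Module.finrank (LaurentSeries ℝ) (LaurentSeries ℂ) = 4 := by
    rw [← eL.finrank_eq, Module.finrank_fin_fun]
  -- the two generating automorphisms
  have hfix_neg : ∀ x, negRE (algebraMap (LaurentSeries ℝ) (LaurentSeries ℂ) x)
      = algebraMap (LaurentSeries ℝ) (LaurentSeries ℂ) x := by
    intro x
    rw [halg]
    ext n
    rcases Int.even_or_odd' n with ⟨m, rfl | rfl⟩
    · rw [negRE_coeff, show ((2 : ℤ) * m) = 2 * m from rfl, zpow_mul]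
      norm_num
    · rw [negRE_coeff, (hι x m).2, mul_zero]
  have hfix_conj : ∀ x, conjRE (algebraMap (LaurentSeries ℝ) (LaurentSeries ℂ) x)
      = algebraMap (LaurentSeries ℝ) (LaurentSeries ℂ) x := by
    intro x
    rw [halg]
    ext n
    rcases Int.even_or_odd' n with ⟨m, rfl | rfl⟩
    · rw [conjRE_coeff, (hι x m).1, Complex.conj_ofReal]
    · rw [conjRE_coeff, (hι x m).2, map_zero]
  let σn : LaurentSeries ℂ ≃ₐ[LaurentSeries ℝ] LaurentSeries ℂ :=
    AlgEquiv.ofRingEquiv hfix_neg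
  let σc : LaurentSeries ℂ ≃ₐ[LaurentSeries ℝ] LaurentSeries ℂ :=
    AlgEquiv.ofRingEquiv hfix_conj
  have hσn_apply : ∀ x, σn x = negFun x := fun x => rfl
  have hσc_apply : ∀ x, σc x = conjHom x := fun x => rfl
  -- values on the generators
  have hσn_s : σn sL = -sL := by
    rw [hσn_apply]
    ext n
    rw [HahnSeries.coeff_neg, negFun_coeff]
    by_cases h : n = 1
    · subst h; rw [hsL, HahnSeries.coeff_single_same]; norm_num
    · rw [hsL, HahnSeries.coeff_single_of_ne h, mul_zero, neg_zero]
  have hσn_i : σn iL = iL := by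
    rw [hσn_apply]
    ext n
    rw [negFun_coeff]
    by_cases h : n = 0
    · subst h; rw [zpow_zero, one_mul]
    · rw [hiL, HahnSeries.coeff_single_of_ne h, mul_zero]
  have hσc_s : σc sL = sL := by
    rw [hσc_apply]
    ext n
    rw [conjHom_coeff]
    by_cases h : n = 1
    · subst h; rw [hsL, HahnSeries.coeff_single_same, map_one]
    · rw [hsL, HahnSeries.coeff_single_of_ne h, map_zero]
  have hσc_i : σc iL = -iL := by
    rw [hσc_apply]
    ext n
    rw [HahnSeries.coeff_neg, conjHom_coeff]
    by_cases h : n = 0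
    · subst h; rw [hiL, HahnSeries.coeff_single_same, Complex.conj_I]
    · rw [hiL, HahnSeries.coeff_single_of_ne h, map_zero, neg_zero]
  -- the generators have order dividing 2 and commute
  have hnn : σn * σn = 1 := by
    refine AlgEquiv.ext fun x => ?_
    rw [AlgEquiv.mul_apply, hσn_apply, hσn_apply, AlgEquiv.one_apply]
    exact negFun_negFun x
  have hcc : σc * σc = 1 := by
    refine AlgEquiv.ext fun x => ?_
    rw [AlgEquiv.mul_apply, hσc_apply, hσc_apply, AlgEquiv.one_apply]
    exact conjHom_conjHom x
  have hcomm : Commute σn σc := by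
    show σn * σc = σc * σn
    refine AlgEquiv.ext fun x => ?_
    rw [AlgEquiv.mul_apply, AlgEquiv.mul_apply, hσn_apply, hσn_apply, hσc_apply, hσc_apply]
    ext n
    rw [negFun_coeff, conjHom_coeff, conjHom_coeff, negFun_coeff, map_mul, map_zpow₀]
    norm_num
  -- the monoid hom from the Klein four-group
  let ψ : Multiplicative (ZMod 2) × Multiplicative (ZMod 2) →*
      (LaurentSeries ℂ ≃ₐ[LaurentSeries ℝ] LaurentSeries ℂ) :=
    MonoidHom.noncommCoprod (zmod2Hom σn hnn) (zmod2Hom σc hcc)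
      (fun m n => (hcomm.pow_pow _ _))
  have hψ : ∀ p, ψ p = zmod2Hom σn hnn p.1 * zmod2Hom σc hcc p.2 := fun p => rfl
  -- non-degeneracy of the generators
  have hs_ne : sL ≠ -sL := by
    intro h
    have := congrArg (fun z => HahnSeries.coeff z 1) h
    simp only [hsL, HahnSeries.coeff_neg, HahnSeries.coeff_single_same] at this
    norm_num at this
  have hi_ne : iL ≠ -iL := by
    intro h
    have := congrArg (fun z => HahnSeries.coeff z 0) h
    simp only [hiL, HahnSeries.coeff_neg, HahnSeries.coeff_single_same] at this
    exact Complex.I_ne_zero (by linear_combination this / 2)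
  -- ψ is injective
  have hinj : Function.Injective ψ := by
    refine (injective_iff_map_eq_one ψ).mpr ?_
    rintro ⟨x, y⟩ h
    rcases zmod2_cases x with rfl | rfl <;> rcases zmod2_cases y with rfl | rfl
    · rfl
    · exfalso
      rw [hψ, zmod2Hom_ofAdd_zero, zmod2Hom_ofAdd_one, one_mul] at h
      exact hi_ne (by rw [← hσc_i, h, AlgEquiv.one_apply])
    · exfalso
      rw [hψ, zmod2Hom_ofAdd_zero, zmod2Hom_ofAdd_one, mul_one] at h
      exact hs_ne (by rw [← hσn_s, h, AlgEquiv.one_apply])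
    · exfalso
      rw [hψ, zmod2Hom_ofAdd_one, zmod2Hom_ofAdd_one] at h
      have : (σn * σc) iL = iL := by rw [h, AlgEquiv.one_apply]
      rw [AlgEquiv.mul_apply, hσc_i, map_neg, hσn_i] at this
      exact hi_ne this.symm
  -- key algebraic identities
  have hit : ι (HahnSeries.single 1 (1 : ℝ)) = sL * sL := by
    rw [hsL, HahnSeries.single_mul_single, mul_one]
    ext n
    rcases Int.even_or_odd' n with ⟨m, rfl | rfl⟩
    · rw [(hι _ m).1]
      by_cases h : m = 1
      · subst h; norm_num [HahnSeries.coeff_single]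
      · rw [HahnSeries.coeff_single_of_ne h,
          HahnSeries.coeff_single_of_ne (by omega : (2 * m : ℤ) ≠ 1 + 1), Complex.ofReal_zero]
    · rw [(hι _ m).2, HahnSeries.coeff_single_of_ne (by omega : (2 * m + 1 : ℤ) ≠ 1 + 1)]
  have hii : iL * iL = ι (-(1 : LaurentSeries ℝ)) := by
    rw [map_neg, map_one, hiL, HahnSeries.single_mul_single, Complex.I_mul_I]
    ext n
    rw [HahnSeries.coeff_neg, HahnSeries.coeff_one, HahnSeries.coeff_single]
    split_ifs <;> first | (exfalso; omega) | norm_num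
  -- determination of an automorphism by its values on the generators
  have hdet : ∀ τ σ : LaurentSeries ℂ ≃ₐ[LaurentSeries ℝ] LaurentSeries ℂ,
      τ sL = σ sL → τ iL = σ iL → τ = σ := by
    intro τ σ h1 h2
    ext x
    obtain ⟨f, rfl⟩ := Phi_surjective ι hι x
    have his : (HahnSeries.single 1 Complex.I : LaurentSeries ℂ) = iL * sL := by
      rw [hiL, hsL, HahnSeries.single_mul_single, mul_one, zero_add]
    simp only [Phi, his, ← hsL, ← hiL, map_add, map_mul, fixρ, h1, h2]
  -- ψ is surjective
  have hsurj : Function.Surjective ψ := by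
    intro σ
    have hs2 : σ sL * σ sL = sL * sL := by
      rw [← map_mul, ← hit, fixρ σ, hit]
    have hcase_s : σ sL = sL ∨ σ sL = -sL := mul_self_eq_mul_self_iff.mp hs2
    have hi2 : σ iL * σ iL = iL * iL := by
      rw [← map_mul, hii, fixρ σ]
    have hcase_i : σ iL = iL ∨ σ iL = -iL := mul_self_eq_mul_self_iff.mp hi2
    rcases hcase_s with h1 | h1 <;> rcases hcase_i with h2 | h2
    · refine ⟨(Multiplicative.ofAdd 0, Multiplicative.ofAdd 0), hdet _ _ ?_ ?_⟩ <;>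
        rw [hψ, zmod2Hom_ofAdd_zero, zmod2Hom_ofAdd_zero, mul_one, AlgEquiv.one_apply]
      · exact h1.symm
      · exact h2.symm
    · refine ⟨(Multiplicative.ofAdd 0, Multiplicative.ofAdd 1), hdet _ _ ?_ ?_⟩ <;>
        rw [hψ, zmod2Hom_ofAdd_zero, zmod2Hom_ofAdd_one, one_mul]
      · rw [hσc_s]; exact h1.symm
      · rw [hσc_i]; exact h2.symm
    · refine ⟨(Multiplicative.ofAdd 1, Multiplicative.ofAdd 0), hdet _ _ ?_ ?_⟩ <;>
        rw [hψ, zmod2Hom_ofAdd_one, zmod2Hom_ofAdd_zero, mul_one]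
      · rw [hσn_s]; exact h1.symm
      · rw [hσn_i]; exact h2.symm
    · refine ⟨(Multiplicative.ofAdd 1, Multiplicative.ofAdd 1), hdet _ _ ?_ ?_⟩ <;>
        rw [hψ, zmod2Hom_ofAdd_one, zmod2Hom_ofAdd_one, AlgEquiv.mul_apply]
      · rw [hσc_s, hσn_s]; exact h1.symm
      · rw [hσc_i, map_neg, hσn_i]; exact h2.symm
  -- assemble everything
  let eMul : (Multiplicative (ZMod 2) × Multiplicative (ZMod 2)) ≃*
      (LaurentSeries ℂ ≃ₐ[LaurentSeries ℝ] LaurentSeries ℂ) :=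
    MulEquiv.ofBijective ψ ⟨hinj, hsurj⟩
  have hcard : Fintype.card (LaurentSeries ℂ ≃ₐ[LaurentSeries ℝ] LaurentSeries ℂ) = 4 := by
    rw [Fintype.card_congr eMul.symm.toEquiv]
    simp
  refine ⟨IsGalois.of_card_aut_eq_finrank (F := LaurentSeries ℝ) (E := LaurentSeries ℂ)
    (by rw [Nat.card_eq_fintype_card, hcard, hrank]), hrank, ⟨eMul.symm⟩⟩
end
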